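/- Let ν ∈ ℝ and β = (1+ν)/2. For every t ∈ ℝ, although each of the three kernels below blows up like 1/s along the diagonal, lim_{s→0, s≠0} [ G^B_{n_x n_x τ_y} + ν G^B_{τ_x τ_x τ_y} + (β/2)·K^H ](γ(t), γ(t+s)) = 0. Here, with r = x − γ(s′), n_x = n(t), τ_x = τ(t), τ_y = τ(s′): G^B_{n_x n_x τ_y}(x, γ(s′)) = −(1/(2π))(r·n_x)(n_x·τ_y)/‖r‖² + (1/(2π))(r·τ_y)(r·n_x)²/‖r‖⁴ − (1/(4π))(r·τ_y)/‖r‖², G^B_{τ_x τ_x τ_y}(x, γ(s′)) = −(1/(2π))(r·τ_x)(τ_x·τ_y)/‖r‖² + (1/(2π))(r·τ_y)(r·τ_x)²/‖r‖⁴ − (1/(4π))(r·τ_y)/‖r‖², and K^H(x, γ(s′)) = (r·τ(s′))/(π‖r‖²) is the Hilbert transform kernel, all evaluated at x = γ(t). -/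

import Mathlib

open Real Filter Topology MeasureTheory

noncomputable section

/-- Euclidean dot product on `ℝ × ℝ`. -/
def dot2 (v w : ℝ × ℝ) : ℝ := v.1 * w.1 + v.2 * w.2

/-- Unit tangent vector `τ(s) = γ′(s)`. -/
def tang (γ : ℝ → ℝ × ℝ) (s : ℝ) : ℝ × ℝ := deriv γ s

/-- Unit normal vector `n(s) = (τ₂(s), −τ₁(s))`. -/
def nor (γ : ℝ → ℝ × ℝ) (s : ℝ) : ℝ × ℝ := ((deriv γ s).2, -(deriv γ s).1)

/-- Signed curvature `κ(s) = −γ″(s)·n(s)`. -/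
def curv (γ : ℝ → ℝ × ℝ) (s : ℝ) : ℝ := -(dot2 (deriv (deriv γ) s) (nor γ s))

/-- Explicit formula for `G^B_{n_x n_x τ_y}(x, γ(s'))`, with `r = x − γ(s')`,
`n_x = n(t)`, `τ_y = τ(s')`. -/
def GB_nx_nx_ty (γ : ℝ → ℝ × ℝ) (t : ℝ) (x : ℝ × ℝ) (s' : ℝ) : ℝ :=
  -(1 / (2 * π)) * dot2 (x - γ s') (nor γ t) * dot2 (nor γ t) (tang γ s')
      / dot2 (x - γ s') (x - γ s')
    + 1 / (2 * π) * dot2 (x - γ s') (tang γ s') * (dot2 (x - γ s') (nor γ t)) ^ 2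
      / (dot2 (x - γ s') (x - γ s')) ^ 2
    - 1 / (4 * π) * dot2 (x - γ s') (tang γ s') / dot2 (x - γ s') (x - γ s')

/-- Explicit formula for `G^B_{τ_x τ_x τ_y}(x, γ(s'))`, with `r = x − γ(s')`,
`τ_x = τ(t)`, `τ_y = τ(s')`. -/
def GB_tx_tx_ty (γ : ℝ → ℝ × ℝ) (t : ℝ) (x : ℝ × ℝ) (s' : ℝ) : ℝ :=
  -(1 / (2 * π)) * dot2 (x - γ s') (tang γ t) * dot2 (tang γ t) (tang γ s')
      / dot2 (x - γ s') (x - γ s')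
    + 1 / (2 * π) * dot2 (x - γ s') (tang γ s') * (dot2 (x - γ s') (tang γ t)) ^ 2
      / (dot2 (x - γ s') (x - γ s')) ^ 2
    - 1 / (4 * π) * dot2 (x - γ s') (tang γ s') / dot2 (x - γ s') (x - γ s')

/-- The Hilbert transform kernel `K^H(x, γ(s')) = (r·τ(s'))/(π‖r‖²)`. -/
def KH (γ : ℝ → ℝ × ℝ) (x : ℝ × ℝ) (s' : ℝ) : ℝ :=
  dot2 (x - γ s') (tang γ s') / (π * dot2 (x - γ s') (x - γ s'))


lemma dot2_comm (v w : ℝ × ℝ) : dot2 v w = dot2 w v := by unfold dot2; ring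

@[simp] lemma dot2_zero_left (v : ℝ × ℝ) : dot2 0 v = 0 := by simp [dot2]
@[simp] lemma dot2_zero_right (v : ℝ × ℝ) : dot2 v 0 = 0 := by simp [dot2]

lemma dot2_smul_left (r : ℝ) (v w : ℝ × ℝ) : dot2 (r • v) w = r * dot2 v w := by
  simp [dot2]; ring
lemma dot2_smul_right (r : ℝ) (v w : ℝ × ℝ) : dot2 v (r • w) = r * dot2 v w := by
  simp [dot2]; ring

lemma hasDerivAt_fst' {p : ℝ → ℝ × ℝ} {p' : ℝ × ℝ} {x : ℝ} (hp : HasDerivAt p p' x) :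
    HasDerivAt (fun s => (p s).1) p'.1 x := by
  simpa [Function.comp_def] using (hasFDerivAt_fst (𝕜 := ℝ) (p := p x)).comp_hasDerivAt x hp

lemma hasDerivAt_snd' {p : ℝ → ℝ × ℝ} {p' : ℝ × ℝ} {x : ℝ} (hp : HasDerivAt p p' x) :
    HasDerivAt (fun s => (p s).2) p'.2 x := by
  simpa [Function.comp_def] using (hasFDerivAt_snd (𝕜 := ℝ) (p := p x)).comp_hasDerivAt x hp

lemma hasDerivAt_dot2 {p q : ℝ → ℝ × ℝ} {p' q' : ℝ × ℝ} {x : ℝ}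
    (hp : HasDerivAt p p' x) (hq : HasDerivAt q q' x) :
    HasDerivAt (fun s => dot2 (p s) (q s)) (dot2 p' (q x) + dot2 (p x) q') x := by
  have h := ((hasDerivAt_fst' hp).mul (hasDerivAt_fst' hq)).add
    ((hasDerivAt_snd' hp).mul (hasDerivAt_snd' hq))
  have hv : dot2 p' (q x) + dot2 (p x) q'
      = p'.1 * (q x).1 + (p x).1 * q'.1 + (p'.2 * (q x).2 + (p x).2 * q'.2) := by
    unfold dot2; ring
  rw [hv]; exact h

lemma quad {h dh : ℝ → ℝ} {d2 : ℝ} (hh : ∀ x, HasDerivAt h (dh x) x)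
    (h2 : HasDerivAt dh d2 0) :
    Tendsto (fun s => (h s - h 0 - s * dh 0) / s ^ 2) (𝓝[≠] (0:ℝ)) (𝓝 (d2 / 2)) := by
  have hf' : ∀ x : ℝ, HasDerivAt (fun s => h s - h 0 - s * dh 0) (dh x - dh 0) x := by
    intro x
    have := ((hh x).sub_const (h 0)).sub ((hasDerivAt_id x).mul_const (dh 0))
    simp only [one_mul] at this
    exact this
  have hg' : ∀ x : ℝ, HasDerivAt (fun s : ℝ => s ^ 2) (2 * x) x := by
    intro x; simpa using hasDerivAt_pow 2 x
  apply HasDerivAt.lhopital_zero_nhdsNE (f' := fun x => dh x - dh 0) (g' := fun x => 2 * x)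
  · exact Eventually.of_forall hf'
  · exact Eventually.of_forall hg'
  · filter_upwards [self_mem_nhdsWithin] with x hx
    exact mul_ne_zero two_ne_zero hx
  · have := (hf' 0).continuousAt.tendsto
    simp only [mul_comm, zero_mul, sub_zero, sub_self, zero_mul] at this
    exact this.mono_left nhdsWithin_le_nhds
  · have : Tendsto (fun s : ℝ => s ^ 2) (𝓝 0) (𝓝 ((0:ℝ) ^ 2)) := (continuous_pow 2).tendsto 0
    simpa using this.mono_left nhdsWithin_le_nhds
  · have hs := hasDerivAt_iff_tendsto_slope.mp h2
    have := hs.div_const 2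
    refine this.congr fun x => ?_
    rw [slope_def_field]
    ring

def ufun (γ : ℝ → ℝ × ℝ) (t : ℝ) (s : ℝ) : ℝ × ℝ :=
  if s = 0 then deriv γ t else s⁻¹ • (γ (t + s) - γ t)

lemma hasDerivAt_ufun (γ : ℝ → ℝ × ℝ) (hγ : ContDiff ℝ (⊤ : ℕ∞) γ) (t : ℝ) :
    HasDerivAt (ufun γ t) ((2⁻¹ : ℝ) • deriv (deriv γ) t) 0 := by
  have hγd : Differentiable ℝ γ := hγ.differentiable (by simp)
  have hγ' : ContDiff ℝ (⊤ : ℕ∞) (deriv γ) := (contDiff_infty_iff_deriv.mp hγ).2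
  have hdd : Differentiable ℝ (deriv γ) := hγ'.differentiable (by simp)
  have h1 : ∀ x : ℝ, HasDerivAt (fun s : ℝ => t + s) 1 x := by
    intro x; simpa using (hasDerivAt_id x).const_add t
  have htrans : ∀ x : ℝ, HasDerivAt (fun s => γ (t + s)) (deriv γ (t + x)) x := by
    intro x
    have := ((hγd (t + x)).hasDerivAt).scomp_of_eq x (h1 x) rfl
    simpa [Function.comp_def] using this
  have hw0 : HasDerivAt (fun s => deriv γ (t + s)) (deriv (deriv γ) t) 0 := by
    have := ((hdd t).hasDerivAt).scomp_of_eq 0 (h1 0) (by ring)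
    simpa [Function.comp_def] using this
  set g2 := deriv (deriv γ) t with hg2
  -- componentwise second-order quotients
  have q1 := quad (h := fun s => (γ (t + s)).1) (dh := fun s => (deriv γ (t + s)).1)
    (fun x => hasDerivAt_fst' (htrans x)) (hasDerivAt_fst' hw0)
  have q2 := quad (h := fun s => (γ (t + s)).2) (dh := fun s => (deriv γ (t + s)).2)
    (fun x => hasDerivAt_snd' (htrans x)) (hasDerivAt_snd' hw0)
  have hpair := q1.prodMk_nhds q2
  rw [hasDerivAt_iff_tendsto_slope]
  have hpt : ((g2.1 / 2, g2.2 / 2) : ℝ × ℝ) = (2⁻¹ : ℝ) • g2 := by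
    simp [Prod.ext_iff]; constructor <;> ring
  rw [← hpt]
  refine hpair.congr' ?_
  filter_upwards [self_mem_nhdsWithin] with s hs
  have hs' : (s : ℝ) ≠ 0 := hs
  have hu : ufun γ t s = s⁻¹ • (γ (t + s) - γ t) := if_neg hs'
  have hu0 : ufun γ t 0 = deriv γ t := if_pos rfl
  rw [slope_def_module]
  rw [hu, hu0]
  rw [Prod.ext_iff]
  constructor <;>
  · simp only [Prod.smul_fst, Prod.smul_snd, Prod.fst_sub, Prod.snd_sub, smul_eq_mul, add_zero,
      sub_zero]
    rw [div_eq_iff (pow_ne_zero 2 hs')]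
    field_simp

def Pfun (γ : ℝ → ℝ × ℝ) (t ν : ℝ) (s : ℝ) : ℝ :=
  dot2 (ufun γ t s) (nor γ t) * dot2 (nor γ t) (deriv γ (t + s))
      * dot2 (ufun γ t s) (ufun γ t s)
    - dot2 (ufun γ t s) (deriv γ (t + s)) * dot2 (ufun γ t s) (nor γ t) ^ 2
    + ν * (dot2 (ufun γ t s) (deriv γ t) * dot2 (deriv γ t) (deriv γ (t + s))
        * dot2 (ufun γ t s) (ufun γ t s)
      - dot2 (ufun γ t s) (deriv γ (t + s)) * dot2 (ufun γ t s) (deriv γ t) ^ 2)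

theorem stmt7 (L : ℝ) (hL : 0 < L) (γ : ℝ → ℝ × ℝ)
    (hγ : ContDiff ℝ (⊤ : ℕ∞) γ)
    (hper : ∀ s, γ (s + L) = γ s)
    (hinj : Set.InjOn γ (Set.Ico 0 L))
    (harc : ∀ s, dot2 (deriv γ s) (deriv γ s) = 1)
    (ν β : ℝ) (hβ : β = (1 + ν) / 2) (t : ℝ) :
    Tendsto
      (fun s : ℝ =>
        GB_nx_nx_ty γ t (γ t) (t + s) + ν * GB_tx_tx_ty γ t (γ t) (t + s)
          + β / 2 * KH γ (γ t) (t + s))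
      (𝓝[≠] (0 : ℝ)) (𝓝 0) := by
  subst hβ
  have hu := hasDerivAt_ufun γ hγ t
  have hdd : Differentiable ℝ (deriv γ) :=
    ((contDiff_infty_iff_deriv.mp hγ).2).differentiable (by simp)
  have h1 : HasDerivAt (fun s : ℝ => t + s) 1 0 := by
    simpa using (hasDerivAt_id (0:ℝ)).const_add t
  have hw0 : HasDerivAt (fun s => deriv γ (t + s)) (deriv (deriv γ) t) 0 := by
    simpa [Function.comp_def] using ((hdd t).hasDerivAt).scomp_of_eq 0 h1 (by ring)
  have hu0 : ufun γ t 0 = deriv γ t := if_pos rfl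
  have hb : HasDerivAt (fun s => dot2 (ufun γ t s) (nor γ t))
      (2⁻¹ * dot2 (deriv (deriv γ) t) (nor γ t)) 0 := by
    simpa [hu0, dot2_smul_left] using hasDerivAt_dot2 hu (hasDerivAt_const 0 (nor γ t))
  have ha : HasDerivAt (fun s => dot2 (ufun γ t s) (deriv γ (t + s)))
      (2⁻¹ * dot2 (deriv (deriv γ) t) (deriv γ t)
        + dot2 (deriv γ t) (deriv (deriv γ) t)) 0 := by
    simpa [hu0, dot2_smul_left] using hasDerivAt_dot2 hu hw0
  have hc : HasDerivAt (fun s => dot2 (ufun γ t s) (ufun γ t s))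
      (2⁻¹ * dot2 (deriv (deriv γ) t) (deriv γ t)
        + 2⁻¹ * dot2 (deriv γ t) (deriv (deriv γ) t)) 0 := by
    simpa [hu0, dot2_smul_left, dot2_smul_right] using hasDerivAt_dot2 hu hu
  have he : HasDerivAt (fun s => dot2 (ufun γ t s) (deriv γ t))
      (2⁻¹ * dot2 (deriv (deriv γ) t) (deriv γ t)) 0 := by
    simpa [hu0, dot2_smul_left] using hasDerivAt_dot2 hu (hasDerivAt_const 0 (deriv γ t))
  have hD : HasDerivAt (fun s => dot2 (nor γ t) (deriv γ (t + s)))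
      (dot2 (nor γ t) (deriv (deriv γ) t)) 0 := by
    simpa using hasDerivAt_dot2 (hasDerivAt_const 0 (nor γ t)) hw0
  have hF : HasDerivAt (fun s => dot2 (deriv γ t) (deriv γ (t + s)))
      (dot2 (deriv γ t) (deriv (deriv γ) t)) 0 := by
    simpa using hasDerivAt_dot2 (hasDerivAt_const 0 (deriv γ t)) hw0
  have hnul1 : dot2 (deriv γ t) (nor γ t) = 0 := by simp [dot2, nor]; ring
  have hnul2 : dot2 (nor γ t) (deriv γ t) = 0 := by simp [dot2, nor]; ring
  have hP0 : HasDerivAt (Pfun γ t ν) 0 0 := by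
    have H := (((hb.mul hD).mul hc).sub (ha.mul (hb.pow 2))).add
      ((((he.mul hF).mul hc).sub (ha.mul (he.pow 2))).const_mul ν)
    unfold Pfun
    refine H.congr_deriv ?_
    simp only [Pi.mul_apply, Pi.pow_apply, hu0, add_zero, hnul1, hnul2, pow_one,
      dot2_comm (deriv (deriv γ) t) (deriv γ t)]
    ring
  have hPval : Pfun γ t ν 0 = 0 := by
    simp only [Pfun, hu0, add_zero, hnul1, hnul2]
    ring
  have hPs : Tendsto (fun s => Pfun γ t ν s / s) (𝓝[≠] (0:ℝ)) (𝓝 0) := by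
    have hslope := hasDerivAt_iff_tendsto_slope.mp hP0
    refine hslope.congr fun x => ?_
    rw [slope_def_field, hPval, sub_zero, sub_zero]
  have hcT : Tendsto (fun s => dot2 (ufun γ t s) (ufun γ t s)) (𝓝[≠] (0:ℝ)) (𝓝 1) := by
    have h0 : dot2 (ufun γ t 0) (ufun γ t 0) = 1 := by rw [hu0]; exact harc t
    have := hc.continuousAt.tendsto
    rw [h0] at this
    exact this.mono_left nhdsWithin_le_nhds
  have hne : ∀ᶠ s in (𝓝[≠] (0:ℝ)), dot2 (ufun γ t s) (ufun γ t s) ≠ 0 :=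
    hcT.eventually_ne one_ne_zero
  have hc2 : Tendsto (fun s => (dot2 (ufun γ t s) (ufun γ t s)) ^ 2) (𝓝[≠] (0:ℝ)) (𝓝 1) := by
    simpa using hcT.pow 2
  have hG : Tendsto (fun s => 1 / (2 * π) * (Pfun γ t ν s / s)
      / (dot2 (ufun γ t s) (ufun γ t s)) ^ 2) (𝓝[≠] (0:ℝ)) (𝓝 0) := by
    have := (hPs.const_mul (1 / (2 * π))).div hc2 one_ne_zero
    simp only [mul_zero, zero_div] at this
    exact this
  refine hG.congr' ?_
  filter_upwards [hne, self_mem_nhdsWithin] with s hcs hs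
  have hs' : (s : ℝ) ≠ 0 := hs
  have hru : γ t - γ (t + s) = (-s) • ufun γ t s := by
    rw [show ufun γ t s = s⁻¹ • (γ (t + s) - γ t) from if_neg hs', smul_smul,
      show (-s) * s⁻¹ = -1 from by field_simp, neg_one_smul, neg_sub]
  simp only [GB_nx_nx_ty, GB_tx_tx_ty, KH, tang, Pfun]
  rw [hru]
  simp only [dot2_smul_left, dot2_smul_right]
  field_simp
  ring
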